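/- Let G be a finite group acting transitively on a finite nonempty set X, let p be a prime, P a Sylow p-subgroup of G, and N = N_G(P). If p does not divide the cardinality of X, then the set of fixed points of P in X is nonempty and is precisely the unique N-orbit of X of cardinality coprime to p; that is, Fix_P(X) is a single N-orbit and its cardinality is coprime to p. -/

import Mathlib

open MulAction Subgroup Pointwise

/-- The fixed-point set of a Sylow `p`-subgroup `P` in a transitive `G`-set `X` equals the
`N_G(P)`-orbit of any of its elements. -/
theorem fixedPoints_eq_orbit_of_mem_aux {p : ℕ} [Fact p.Prime]
    {G : Type*} [Group G] [Fintype G]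
    {X : Type*} [MulAction G X] [MulAction.IsPretransitive G X]
    (P : Sylow p G) {x : X} (hx : x ∈ MulAction.fixedPoints (P : Subgroup G) X) :
    MulAction.fixedPoints (P : Subgroup G) X
      = MulAction.orbit (Subgroup.normalizer ((P : Subgroup G) : Set G)) x := by
  ext y
  constructor
  · intro hy
    obtain ⟨g, rfl⟩ := MulAction.exists_smul_eq G x y
    set K := MulAction.stabilizer G (g • x) with hK
    have h1 : (P : Subgroup G) ≤ K := fun q hq => by
      have := hy ⟨q, hq⟩
      exact MulAction.mem_stabilizer_iff.mpr (by simpa using this)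
    have h2 : ((g • P : Sylow p G) : Subgroup G) ≤ K := by
      intro z hz
      rw [Sylow.coe_subgroup_smul, Subgroup.mem_pointwise_smul_iff_inv_smul_mem] at hz
      have hz' : g⁻¹ * z * g ∈ (P : Subgroup G) := by
        simpa [MulAut.smul_def, mul_assoc] using hz
      have hfix : (g⁻¹ * z * g) • x = x := hx ⟨_, hz'⟩
      show z • (g • x) = g • x
      calc z • g • x = g • ((g⁻¹ * z * g) • x) := by
            rw [smul_smul, smul_smul]; congr 1; group
        _ = g • x := by rw [hfix]
    obtain ⟨k, hk⟩ := MulAction.exists_smul_eq K ((g • P).subtype h2) (P.subtype h1)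
    simp_rw [Sylow.smul_subtype, Subgroup.smul_def, smul_smul] at hk
    have hn : (↑k * g : G) ∈ Subgroup.normalizer ((P : Subgroup G) : Set G) :=
      Sylow.smul_eq_iff_mem_normalizer.mp (Sylow.subtype_injective hk)
    refine ⟨⟨↑k * g, hn⟩, ?_⟩
    show (↑k * g : G) • x = g • x
    rw [mul_smul]
    exact k.2
  · rintro ⟨⟨n, hn⟩, rfl⟩
    rintro ⟨q, hq⟩
    show q • (n • x) = n • x
    have hq' : n⁻¹ * q * n ∈ (P : Subgroup G) := by
      rw [Subgroup.mem_normalizer_iff''] at hn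
      exact (hn q).mp hq
    have hfix : (n⁻¹ * q * n) • x = x := hx ⟨_, hq'⟩
    calc q • n • x = n • ((n⁻¹ * q * n) • x) := by
          rw [smul_smul, smul_smul]; congr 1; group
      _ = n • x := by rw [hfix]

/-- If `G` acts transitively on `X` and `p ∤ |X|`, then the fixed-point set of `P` in `X`
is nonempty, is a single `N = N_G(P)`-orbit, has cardinality coprime to `p`, and is the
unique `N`-orbit of cardinality coprime to `p`. -/
theorem fixedPoints_eq_unique_coprime_norbit {p : ℕ} [Fact p.Prime]
    {G : Type*} [Group G] [Fintype G]
    {X : Type*} [Fintype X] [Nonempty X] [MulAction G X] [MulAction.IsPretransitive G X]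
    (P : Sylow p G) (h : ¬ p ∣ Nat.card X) :
    (MulAction.fixedPoints (P : Subgroup G) X).Nonempty ∧
      (∃ x : X, MulAction.fixedPoints (P : Subgroup G) X
          = MulAction.orbit (Subgroup.normalizer ((P : Subgroup G) : Set G)) x) ∧
      p.Coprime (Nat.card (MulAction.fixedPoints (P : Subgroup G) X)) ∧
      ∀ y : X, p.Coprime (Nat.card (MulAction.orbit (Subgroup.normalizer ((P : Subgroup G) : Set G)) y)) →
        MulAction.orbit (Subgroup.normalizer ((P : Subgroup G) : Set G)) y
          = MulAction.fixedPoints (P : Subgroup G) X := by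
  have hp : p.Prime := Fact.out
  obtain ⟨x, hx⟩ := P.2.nonempty_fixed_point_of_prime_not_dvd_card X h
  have horb := fixedPoints_eq_orbit_of_mem_aux P hx
  have hmod := P.2.card_modEq_card_fixedPoints X
  have hnd : ¬ p ∣ Nat.card (MulAction.fixedPoints (P : Subgroup G) X) := fun hd =>
    h (Nat.modEq_zero_iff_dvd.mp (hmod.trans (Nat.modEq_zero_iff_dvd.mpr hd)))
  refine ⟨⟨x, hx⟩, ⟨x, horb⟩, hp.coprime_iff_not_dvd.mpr hnd, ?_⟩
  intro y hy
  have hnd' : ¬ p ∣ Nat.card (MulAction.orbit (Subgroup.normalizer ((P : Subgroup G) : Set G)) y) :=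
    hp.coprime_iff_not_dvd.mp hy
  set N := Subgroup.normalizer ((P : Subgroup G) : Set G) with hN
  have hP' : IsPGroup p ((P : Subgroup G).subgroupOf N) := P.2.comap_subtype
  obtain ⟨z, hz⟩ := hP'.nonempty_fixed_point_of_prime_not_dvd_card
    (MulAction.orbit N y) hnd'
  have hzfix : (z : X) ∈ MulAction.fixedPoints (P : Subgroup G) X := by
    rintro ⟨q, hq⟩
    have hqN : q ∈ N := Subgroup.le_normalizer hq
    have hz' := hz ⟨⟨q, hqN⟩, (Subgroup.mem_subgroupOf).mpr hq⟩
    have := congrArg Subtype.val hz'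
    simpa using this
  have h1 : MulAction.orbit N (z : X) = MulAction.orbit N y :=
    MulAction.orbit_eq_iff.mpr z.2
  rw [← h1, fixedPoints_eq_orbit_of_mem_aux P hzfix]
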